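/- Fix natural numbers M ≥ 1, an integer K with 1 ≤ K ≤ M, and an inner alphabet partitioned into M groups each of size g ≥ 1 (total n = M·g elements). Call a codeword any set consisting of exactly one element from each group. If J · 2^M · g^{M−K} ≤ g^M, then there exist J codewords A₁, …, A_J such that |A_i ∩ A_j| < K for all i ≠ j. -/

import Mathlib

open Finset

lemma inner_count (M g K : ℕ) (A : Fin M → Fin g) (S : Finset (Fin M))
    (hS : S.card = K) :
    (Finset.univ.filter (fun B : Fin M → Fin g => ∀ x ∈ S, B x = A x)).card
      ≤ g ^ (M - K) := by
  classical
  have hinj : Set.InjOn (fun (B : Fin M → Fin g) (x : {x // x ∈ Sᶜ}) => B x)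
      (Finset.univ.filter (fun B : Fin M → Fin g => ∀ x ∈ S, B x = A x)) := by
    intro B₁ h1 B₂ h2 h
    simp only [coe_filter, Set.mem_setOf_eq, mem_univ, true_and] at h1 h2
    funext x
    by_cases hx : x ∈ S
    · rw [h1 x hx, h2 x hx]
    · exact congrFun h ⟨x, by simpa using hx⟩
  calc (Finset.univ.filter (fun B : Fin M → Fin g => ∀ x ∈ S, B x = A x)).card
      ≤ (Finset.univ : Finset ({x // x ∈ Sᶜ} → Fin g)).card :=
        Finset.card_le_card_of_injOn _ (fun _ _ => Finset.mem_univ _) hinj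
    _ = g ^ (M - K) := by
        rw [card_univ, Fintype.card_fun, Fintype.card_fin, Fintype.card_coe,
          Finset.card_compl, Fintype.card_fin, hS]

lemma bad_count (M g K : ℕ) (hKM : K ≤ M) (A : Fin M → Fin g) :
    (Finset.univ.filter (fun B : Fin M → Fin g =>
      K ≤ (Finset.univ.filter (fun x => A x = B x)).card)).card
      ≤ 2 ^ M * g ^ (M - K) := by
  classical
  have hsub : (Finset.univ.filter (fun B : Fin M → Fin g =>
      K ≤ (Finset.univ.filter (fun x => A x = B x)).card)) ⊆
      (Finset.univ.powersetCard K).biUnion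
        (fun S => Finset.univ.filter (fun B : Fin M → Fin g => ∀ x ∈ S, B x = A x)) := by
    intro B hB
    simp only [mem_filter, mem_univ, true_and] at hB
    obtain ⟨S, hS, hSc⟩ := Finset.exists_subset_card_eq hB
    refine Finset.mem_biUnion.2 ⟨S, Finset.mem_powersetCard.2 ⟨Finset.subset_univ _, hSc⟩, ?_⟩
    simp only [mem_filter, mem_univ, true_and]
    intro x hx
    have := hS hx
    simp only [mem_filter] at this
    exact this.2.symm
  calc _ ≤ _ := Finset.card_le_card hsub
    _ ≤ ∑ S ∈ Finset.univ.powersetCard K,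
        (Finset.univ.filter (fun B : Fin M → Fin g => ∀ x ∈ S, B x = A x)).card :=
        Finset.card_biUnion_le
    _ ≤ ∑ S ∈ (Finset.univ : Finset (Fin M)).powersetCard K, g ^ (M - K) :=
        Finset.sum_le_sum fun S hS => inner_count M g K A S (Finset.mem_powersetCard.1 hS).2
    _ = M.choose K * g ^ (M - K) := by
        rw [Finset.sum_const, Finset.card_powersetCard, card_univ, Fintype.card_fin,
          smul_eq_mul]
    _ ≤ 2 ^ M * g ^ (M - K) := by
        refine Nat.mul_le_mul_right _ ?_
        calc M.choose K ≤ ∑ i ∈ Finset.range (M + 1), M.choose i :=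
              Finset.single_le_sum (fun _ _ => Nat.zero_le _)
                (Finset.mem_range.2 (Nat.lt_succ_of_le hKM))
          _ = 2 ^ M := Nat.sum_range_choose M

lemma greedy_aux (M g K : ℕ) (hg : 1 ≤ g) (hKM : K ≤ M) :
    ∀ J : ℕ, J * (2 ^ M * g ^ (M - K)) ≤ g ^ M →
    ∃ A : Fin J → (Fin M → Fin g), ∀ i j : Fin J, i ≠ j →
      (Finset.univ.filter (fun x => A i x = A j x)).card < K := by
  intro J
  induction J with
  | zero => exact fun _ => ⟨Fin.elim0, fun i => i.elim0⟩
  | succ J ih =>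
    intro hJ
    obtain ⟨A, hA⟩ := ih (le_trans (Nat.mul_le_mul_right _ (Nat.le_succ J)) hJ)
    classical
    set bad := (Finset.univ : Finset (Fin J)).biUnion (fun i =>
      Finset.univ.filter (fun B : Fin M → Fin g =>
        K ≤ (Finset.univ.filter (fun x => A i x = B x)).card)) with hbad
    have hcard : bad.card ≤ J * (2 ^ M * g ^ (M - K)) := by
      calc bad.card ≤ ∑ i : Fin J, (Finset.univ.filter (fun B : Fin M → Fin g =>
              K ≤ (Finset.univ.filter (fun x => A i x = B x)).card)).card :=
            Finset.card_biUnion_le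
        _ ≤ ∑ _i : Fin J, 2 ^ M * g ^ (M - K) :=
            Finset.sum_le_sum fun i _ => bad_count M g K hKM (A i)
        _ = J * (2 ^ M * g ^ (M - K)) := by
            rw [Finset.sum_const, card_univ, Fintype.card_fin, smul_eq_mul]
    have hlt : bad.card < Fintype.card (Fin M → Fin g) := by
      rw [Fintype.card_fun, Fintype.card_fin, Fintype.card_fin]
      have hpos : 0 < 2 ^ M * g ^ (M - K) :=
        Nat.mul_pos (Nat.pow_pos (by norm_num)) (Nat.pow_pos hg)
      have : J * (2 ^ M * g ^ (M - K)) < (J + 1) * (2 ^ M * g ^ (M - K)) := by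
        exact (Nat.mul_lt_mul_right hpos).2 (Nat.lt_succ_self J)
      omega
    have hB : ∃ B : Fin M → Fin g, B ∉ bad := by
      by_contra h
      push_neg at h
      have : (Finset.univ : Finset (Fin M → Fin g)) ⊆ bad := fun B _ => h B
      have := Finset.card_le_card this
      rw [card_univ] at this
      omega
    obtain ⟨B, hBmem⟩ := hB
    have hBgood : ∀ i : Fin J, (Finset.univ.filter (fun x => A i x = B x)).card < K := by
      intro i
      by_contra h
      push_neg at h
      exact hBmem (Finset.mem_biUnion.2 ⟨i, Finset.mem_univ _,
        Finset.mem_filter.2 ⟨Finset.mem_univ _, h⟩⟩)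
    refine ⟨Fin.snoc A B, ?_⟩
    intro i j hij
    have hsymm : ∀ C D : Fin M → Fin g,
        (Finset.univ.filter (fun x => C x = D x)).card
          = (Finset.univ.filter (fun x => D x = C x)).card := by
      intro C D
      congr 1
      apply Finset.filter_congr
      intro x _
      exact ⟨Eq.symm, Eq.symm⟩
    induction i using Fin.lastCases with
    | last =>
      induction j using Fin.lastCases with
      | last => exact absurd rfl hij
      | cast j' =>
        simp only [Fin.snoc_last, Fin.snoc_castSucc]
        rw [hsymm]
        exact hBgood j'
    | cast i' =>
      induction j using Fin.lastCases with
      | last =>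
        simp only [Fin.snoc_last, Fin.snoc_castSucc]
        exact hBgood i'
      | cast j' =>
        simp only [Fin.snoc_castSucc]
        exact hA i' j' (fun h => hij (by rw [h]))

theorem greedy_codebook (M g K J : ℕ) (hM : 1 ≤ M) (hg : 1 ≤ g)
    (hK1 : 1 ≤ K) (hKM : K ≤ M) (hJ : J * 2 ^ M * g ^ (M - K) ≤ g ^ M) :
    ∃ A : Fin J → (Fin M → Fin g), ∀ i j : Fin J, i ≠ j →
      (Finset.univ.filter (fun x => A i x = A j x)).card < K := by
  exact greedy_aux M g K hg hKM J (by rw [← mul_assoc]; exact hJ)
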